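/- Let N = k^t q with k ≥ 2, t ≥ 1, gcd(q,k)=1, and define the map f on Z/NZ by f(A) = kA + A_{t-1} mod N, where A_{t-1} is the coefficient of k^{t-1} in the base-k expansion of the representative of A in {0,...,N-1}. Then f is a bijection on Z/NZ. -/

import Mathlib

-- digit rotation mod k^(s+1) is injective
lemma digit_rotate_inj (k s x y : ℕ) (hk : 1 ≤ k) (hx : x < k ^ (s + 1)) (hy : y < k ^ (s + 1))
    (h : k * x + x / k ^ s ≡ k * y + y / k ^ s [MOD k ^ (s + 1)]) : x = y := by
  have hks : 0 < k ^ s := pow_pos hk s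
  have hdx : x / k ^ s < k := Nat.div_lt_of_lt_mul (by rwa [← pow_succ])
  have hdy : y / k ^ s < k := Nat.div_lt_of_lt_mul (by rwa [← pow_succ])
  have key : ∀ z : ℕ, k * z + z / k ^ s ≡ k * (z % k ^ s) + z / k ^ s [MOD k ^ (s + 1)] := by
    intro z
    have : k * z = k ^ (s + 1) * (z / k ^ s) + k * (z % k ^ s) := by
      conv_lhs => rw [← Nat.div_add_mod z (k ^ s)]
      ring
    calc k * z + z / k ^ s = k ^ (s+1) * (z / k ^ s) + (k * (z % k ^ s) + z / k ^ s) := by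
          rw [this]; ring
      _ ≡ 0 + (k * (z % k ^ s) + z / k ^ s) [MOD k ^ (s+1)] :=
          Nat.ModEq.add_right _ (Nat.modEq_zero_iff_dvd.mpr ⟨_, rfl⟩)
      _ = k * (z % k ^ s) + z / k ^ s := by rw [zero_add]
  have hlt : ∀ z : ℕ, z / k ^ s < k → k * (z % k ^ s) + z / k ^ s < k ^ (s + 1) := by
    intro z hz
    have h0 : z % k ^ s < k ^ s := Nat.mod_lt _ hks
    have h1 : k * (z % k ^ s) ≤ k * (k ^ s - 1) := Nat.mul_le_mul_left k (by omega)
    have h2 : k * (k ^ s - 1) + k = k * k ^ s := by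
      rw [← Nat.mul_succ]
      congr 1
      omega
    have h3 : k * k ^ s = k ^ (s + 1) := (pow_succ' k s).symm
    omega
  have heq : k * (x % k ^ s) + x / k ^ s = k * (y % k ^ s) + y / k ^ s := by
    have := ((key x).symm.trans h).trans (key y)
    exact Nat.ModEq.eq_of_lt_of_lt this (hlt x hdx) (hlt y hdy)
  have hd : x / k ^ s = y / k ^ s := by
    have h1 := congrArg (· % k) heq
    simpa [Nat.add_mul_mod_self_left, Nat.mod_eq_of_lt hdx, Nat.mod_eq_of_lt hdy,
      Nat.mul_add_mod] using h1
  have hm : x % k ^ s = y % k ^ s := by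
    have : k * (x % k ^ s) = k * (y % k ^ s) := by omega
    exact Nat.eq_of_mul_eq_mul_left (by omega) this
  calc x = k ^ s * (x / k ^ s) + x % k ^ s := (Nat.div_add_mod x _).symm
    _ = k ^ s * (y / k ^ s) + y % k ^ s := by rw [hd, hm]
    _ = y := Nat.div_add_mod y _

theorem shuffle_map_bijective (N k t q : ℕ) (hk : 2 ≤ k) (ht : 1 ≤ t) (hq : 1 ≤ q)
    (hco : Nat.Coprime q k) (hN : N = k ^ t * q) [NeZero N] :
    Function.Bijective (fun A : ZMod N =>
      (k : ZMod N) * A + ((A.val / k ^ (t - 1)) % k : ℕ)) := by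
  rw [Finite.injective_iff_bijective.symm]
  intro A B h
  simp only at h
  obtain ⟨s, rfl⟩ : ∃ s, t = s + 1 := ⟨t - 1, (Nat.succ_pred_eq_of_pos ht).symm⟩
  simp only [Nat.add_sub_cancel] at h ⊢
  set a := A.val with ha
  set b := B.val with hb
  have hNpos : 0 < N := Nat.pos_of_ne_zero (NeZero.ne N)
  have haN : a < N := ZMod.val_lt A
  have hbN : b < N := ZMod.val_lt B
  -- convert to a Nat.ModEq
  have hmod : k * a + a / k ^ s % k ≡ k * b + b / k ^ s % k [MOD N] := by
    have h1 : ((k * a + a / k ^ s % k : ℕ) : ZMod N) = ((k * b + b / k ^ s % k : ℕ) : ZMod N) := by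
      push_cast
      rwa [ha, hb, ZMod.natCast_val, ZMod.natCast_val, ZMod.cast_id, ZMod.cast_id]
    exact (ZMod.natCast_eq_natCast_iff _ _ _).mp h1
  have hk1 : 1 ≤ k := by omega
  have hKdvd : k ^ (s + 1) ∣ N := hN ▸ Dvd.intro q rfl
  have hqdvd : q ∣ N := hN ▸ Dvd.intro (k ^ (s+1)) (mul_comm _ _)
  set x := a % k ^ (s + 1) with hx
  set y := b % k ^ (s + 1) with hy
  have hxd : a / k ^ s % k = x / k ^ s := by
    rw [hx, pow_succ, Nat.mod_mul_right_div_self]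
  have hyd : b / k ^ s % k = y / k ^ s := by
    rw [hy, pow_succ, Nat.mod_mul_right_div_self]
  -- mod k^(s+1)
  have hmodK : k * x + x / k ^ s ≡ k * y + y / k ^ s [MOD k ^ (s + 1)] := by
    have h2 : k * a + a / k ^ s % k ≡ k * b + b / k ^ s % k [MOD k ^ (s + 1)] :=
      hmod.of_dvd hKdvd
    rw [hxd, hyd] at h2
    have hax : k * a ≡ k * x [MOD k ^ (s+1)] := (Nat.mod_modEq a _).symm.mul_left k
    have hby : k * b ≡ k * y [MOD k ^ (s+1)] := (Nat.mod_modEq b _).symm.mul_left k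
    exact ((hax.symm.add_right _).trans h2).trans (hby.add_right _)
  have hxy : x = y :=
    digit_rotate_inj k s x y hk1 (Nat.mod_lt _ (pow_pos hk1 _))
      (Nat.mod_lt _ (pow_pos hk1 _)) hmodK
  -- digits equal, cancel them
  have hdd : a / k ^ s % k = b / k ^ s % k := by rw [hxd, hyd, hxy]
  have hka : k * a ≡ k * b [MOD N] := by
    rw [hdd] at hmod
    exact hmod.add_right_cancel' _
  -- mod q : cancel k
  have hq2 : a ≡ b [MOD q] :=
    Nat.ModEq.cancel_left_of_coprime (by simpa using hco) (hka.of_dvd hqdvd)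
  -- mod k^(s+1)
  have hK2 : a ≡ b [MOD k ^ (s + 1)] := hxy
  -- combine
  have hcop : Nat.Coprime (k ^ (s + 1)) q := (hco.symm).pow_left _
  have : a ≡ b [MOD N] := by
    rw [hN]
    exact (Nat.modEq_and_modEq_iff_modEq_mul hcop).mp ⟨hK2, hq2⟩
  have hab : a = b := Nat.ModEq.eq_of_lt_of_lt this haN hbN
  have := congrArg (Nat.cast : ℕ → ZMod N) hab
  rwa [ha, hb, ZMod.natCast_val, ZMod.natCast_val, ZMod.cast_id, ZMod.cast_id] at this
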